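/- arXiv:2308.15376 — 2 statements merged into one kernel-verified Lean document; each statement's English description precedes it below -/
import Mathlib

section
/- Let Γ be a group generated by a finite symmetric set S = S⁻¹ ⊆ Γ, let D ⊆ Γ be finite and nonempty, and let λ > 0 be a real number such that γ_S(n) ≥ λ·|D| for some n ∈ ℕ (so that φ_S(λ·|D|) is finite). Then |∂_S D| · φ_S(λ·|D|) ≥ (1 − 1/λ) · |D|. -/
open scoped Pointwise

variable {G : Type*} [Group G] [DecidableEq G]

/-- The ball of radius `r` in the word metric: elements of `G` expressible as
a product of at most `r` elements of `S`. -/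
def wordBall (S : Finset G) : ℕ → Finset G
  | 0 => {1}
  | r + 1 => wordBall S r ∪ S * wordBall S r

/-- The inner boundary of a finite set `D` with respect to the generating set `S`. -/
def innerBoundary (S D : Finset G) : Finset G :=
  D.filter fun x => ∃ s ∈ S, s * x ∉ D


lemma one_mem_wordBall (S : Finset G) (n : ℕ) : (1 : G) ∈ wordBall S n := by
  induction n with
  | zero => simp [wordBall]
  | succ n ih => simp [wordBall, ih]

lemma sdiff_smul_subset_boundary (S D : Finset G)
    (hsymm : ∀ s ∈ S, s⁻¹ ∈ S) {s : G} (hs : s ∈ S) :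
    D \ s • D ⊆ innerBoundary S D := by
  intro x hx
  rw [Finset.mem_sdiff] at hx
  rw [innerBoundary, Finset.mem_filter]
  refine ⟨hx.1, s⁻¹, hsymm s hs, fun h => hx.2 ?_⟩
  have : s • (s⁻¹ * x) ∈ s • D := Finset.smul_mem_smul_finset h
  simpa [smul_eq_mul, mul_assoc] using this

lemma sdiff_card_le (S D : Finset G) (hsymm : ∀ s ∈ S, s⁻¹ ∈ S) :
    ∀ n : ℕ, ∀ g ∈ wordBall S n,
      (D \ g • D).card ≤ n * (innerBoundary S D).card := by
  intro n
  induction n with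
  | zero =>
    intro g hg
    simp only [wordBall, Finset.mem_singleton] at hg
    simp [hg]
  | succ n ih =>
    intro g hg
    rw [wordBall, Finset.mem_union] at hg
    rcases hg with hg | hg
    · exact (ih g hg).trans (Nat.mul_le_mul_right _ (Nat.le_succ n))
    · rw [Finset.mem_mul] at hg
      obtain ⟨s, hs, h, hh, rfl⟩ := hg
      have hsub : D \ (s * h) • D ⊆ (D \ s • D) ∪ s • (D \ h • D) := by
        intro x hx
        rw [Finset.mem_sdiff] at hx
        rw [Finset.mem_union]
        by_cases hxs : x ∈ s • D
        · right
          rw [Finset.mem_smul_finset] at hxs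
          obtain ⟨y, hy, rfl⟩ := hxs
          refine Finset.smul_mem_smul_finset ?_
          rw [Finset.mem_sdiff]
          refine ⟨hy, fun hyh => hx.2 ?_⟩
          rw [mul_smul]
          exact Finset.smul_mem_smul_finset hyh
        · left; exact Finset.mem_sdiff.mpr ⟨hx.1, hxs⟩
      calc (D \ (s * h) • D).card ≤ ((D \ s • D) ∪ s • (D \ h • D)).card :=
            Finset.card_le_card hsub
        _ ≤ (D \ s • D).card + (s • (D \ h • D)).card := Finset.card_union_le _ _
        _ ≤ (innerBoundary S D).card + n * (innerBoundary S D).card := by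
            refine Nat.add_le_add ?_ ?_
            · exact Finset.card_le_card (sdiff_smul_subset_boundary S D hsymm hs)
            · rw [Finset.card_smul_finset]
              exact ih h hh
        _ = (n + 1) * (innerBoundary S D).card := by ring

lemma sum_inter_le (D B : Finset G) :
    ∑ g ∈ B, (D ∩ g • D).card ≤ D.card * D.card := by
  have h1 : ∀ g : G, (D ∩ g • D).card ≤ (D.filter fun y => g * y ∈ D).card := by
    intro g
    apply Finset.card_le_card_of_injOn (fun x => g⁻¹ * x)
    · intro x hx
      rw [Finset.mem_coe, Finset.mem_inter] at hx
      rw [Finset.mem_coe, Finset.mem_filter]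
      constructor
      · rw [Finset.mem_smul_finset] at hx
        obtain ⟨y, hy, rfl⟩ := hx.2
        simpa [smul_eq_mul] using hy
      · simpa using hx.1
    · intro a _ b _ h
      exact mul_left_cancel h
  calc ∑ g ∈ B, (D ∩ g • D).card ≤ ∑ g ∈ B, (D.filter fun y => g * y ∈ D).card :=
        Finset.sum_le_sum fun g _ => h1 g
    _ = ∑ g ∈ B, ∑ y ∈ D, if g * y ∈ D then 1 else 0 :=
        Finset.sum_congr rfl fun g _ => Finset.card_filter _ _
    _ = ∑ y ∈ D, ∑ g ∈ B, if g * y ∈ D then 1 else 0 := Finset.sum_comm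
    _ = ∑ y ∈ D, (B.filter fun g => g * y ∈ D).card :=
        Finset.sum_congr rfl fun y _ => (Finset.card_filter _ _).symm
    _ ≤ ∑ y ∈ D, D.card := by
        refine Finset.sum_le_sum fun y _ => ?_
        apply Finset.card_le_card_of_injOn (fun g => g * y)
        · intro g hg
          exact (Finset.mem_filter.mp hg).2
        · intro a _ b _ h
          exact mul_right_cancel h
    _ = D.card * D.card := by simp [mul_comm]

theorem stmt4 (S : Finset G)
    (hsymm : ∀ s ∈ S, s⁻¹ ∈ S) (hgen : Subgroup.closure (S : Set G) = ⊤)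
    (D : Finset G) (hD : D.Nonempty) (lam : ℝ) (hlam : 0 < lam)
    (hex : ∃ n : ℕ, lam * (D.card : ℝ) ≤ ((wordBall S n).card : ℝ)) :
    (1 - 1 / lam) * (D.card : ℝ) ≤
      ((innerBoundary S D).card : ℝ) *
        ((sInf {n : ℕ | lam * (D.card : ℝ) ≤ ((wordBall S n).card : ℝ)} : ℕ) : ℝ) := by
  set n := sInf {n : ℕ | lam * (D.card : ℝ) ≤ ((wordBall S n).card : ℝ)} with hn
  have hmem : lam * (D.card : ℝ) ≤ ((wordBall S n).card : ℝ) := Nat.sInf_mem hex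
  set B := wordBall S n with hB
  have hBne : B.Nonempty := ⟨1, one_mem_wordBall S n⟩
  have hBpos : (0 : ℝ) < B.card := by exact_mod_cast Finset.card_pos.mpr hBne
  have hdpos : (0 : ℝ) < D.card := by exact_mod_cast Finset.card_pos.mpr hD
  -- average bound
  have hsum : ∑ g ∈ B, ((D ∩ g • D).card : ℝ) ≤ ∑ g ∈ B, (D.card : ℝ) ^ 2 / B.card := by
    rw [Finset.sum_const, nsmul_eq_mul, mul_div_cancel₀ _ (ne_of_gt hBpos)]
    calc ∑ g ∈ B, ((D ∩ g • D).card : ℝ) = ((∑ g ∈ B, (D ∩ g • D).card : ℕ) : ℝ) := by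
          push_cast; ring
      _ ≤ ((D.card * D.card : ℕ) : ℝ) := by exact_mod_cast sum_inter_le D B
      _ = (D.card : ℝ) ^ 2 := by push_cast; ring
  obtain ⟨g, hg, hgle⟩ := Finset.exists_le_of_sum_le hBne hsum
  have hclam : ((D ∩ g • D).card : ℝ) * lam ≤ (D.card : ℝ) := by
    have h1 : ((D ∩ g • D).card : ℝ) * B.card ≤ (D.card : ℝ) ^ 2 :=
      (le_div_iff₀ hBpos).mp hgle
    nlinarith [(Nat.cast_nonneg (D ∩ g • D).card : (0:ℝ) ≤ _), hmem, hdpos]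
  have hc : ((D ∩ g • D).card : ℝ) ≤ (D.card : ℝ) / lam := (le_div_iff₀ hlam).mpr hclam
  have hkey : ((D \ g • D).card : ℝ) ≤ (innerBoundary S D).card * n := by
    have := sdiff_card_le S D hsymm n g hg
    have h2 : ((D \ g • D).card : ℝ) ≤ (n * (innerBoundary S D).card : ℕ) := by
      exact_mod_cast this
    push_cast at h2
    linarith
  have hcard : ((D \ g • D).card : ℝ) + ((D ∩ g • D).card : ℝ) = (D.card : ℝ) := by
    exact_mod_cast Finset.card_sdiff_add_card_inter D (g • D)
  have heq : (1 - 1 / lam) * (D.card : ℝ) = (D.card : ℝ) - (D.card : ℝ) / lam := by ring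
  linarith
end

section
/- Let Γ be a group generated by a finite symmetric set S = S⁻¹ ⊆ Γ with Føl(n) < ∞ for every n ∈ ℕ (i.e. Γ is amenable), and let g : (0,∞) → (0,∞) be a strictly increasing differentiable function with tame superpolynomial growth (TSPG) such that γ_S(r−1) ≥ g(r) for every integer r ≥ 1. Then for every ε ∈ (0,1) there exists N ∈ ℕ such that Føl(n) ≥ g((1−ε)·n) for every integer n ≥ N. -/
open scoped Pointwise

variable {G : Type*} [Group G] [DecidableEq G]

/-- The Følner function of `(G,S)`: the smallest cardinality of a finite nonempty
set `D` with `n·|∂_S D| ≤ |D|`, or `∞` if no such set exists. -/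
noncomputable def folner (S : Finset G) (n : ℕ) : ℕ∞ :=
  ⨅ (D : Finset G) (_ : D.Nonempty) (_ : n * (innerBoundary S D).card ≤ D.card),
    (D.card : ℕ∞)

lemma sdiff_smul_card (S D : Finset G) (hsymm : ∀ s ∈ S, s⁻¹ ∈ S)
    {s : G} (hs : s ∈ S) : (D \ s • D).card ≤ (innerBoundary S D).card := by
  apply Finset.card_le_card
  intro x hx
  rw [Finset.mem_sdiff] at hx
  rw [innerBoundary, Finset.mem_filter]
  refine ⟨hx.1, s⁻¹, hsymm s hs, fun hmem => hx.2 ?_⟩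
  rw [Finset.mem_smul_finset]
  exact ⟨s⁻¹ * x, hmem, by simp [smul_eq_mul, mul_assoc]⟩

lemma telescope (S D : Finset G) (hsymm : ∀ s ∈ S, s⁻¹ ∈ S) :
    ∀ m : ℕ, ∀ w ∈ wordBall S m,
      (D \ w • D).card ≤ m * (innerBoundary S D).card := by
  intro m
  induction m with
  | zero => intro w hw; simp [wordBall] at hw; simp [hw]
  | succ m ih =>
    intro w hw
    rw [wordBall, Finset.mem_union] at hw
    rcases hw with hw | hw
    · exact (ih w hw).trans (Nat.mul_le_mul_right _ (Nat.le_succ m))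
    · rw [Finset.mem_mul] at hw
      obtain ⟨s, hs, u, hu, rfl⟩ := hw
      have hsub : D \ (s * u) • D ⊆ (D \ s • D) ∪ s • (D \ u • D) := by
        intro x hx
        rw [Finset.mem_sdiff] at hx
        rw [Finset.mem_union]
        by_cases hxs : x ∈ s • D
        · right
          rw [Finset.mem_smul_finset] at hxs
          obtain ⟨y, hy, rfl⟩ := hxs
          rw [Finset.smul_finset_sdiff, Finset.mem_sdiff]
          refine ⟨Finset.smul_mem_smul_finset hy, fun hmem => hx.2 ?_⟩
          rw [mul_smul]; exact hmem
        · left; exact Finset.mem_sdiff.2 ⟨hx.1, hxs⟩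
      calc (D \ (s * u) • D).card ≤ ((D \ s • D) ∪ s • (D \ u • D)).card :=
            Finset.card_le_card hsub
        _ ≤ (D \ s • D).card + (s • (D \ u • D)).card := Finset.card_union_le _ _
        _ ≤ (innerBoundary S D).card + m * (innerBoundary S D).card := by
            rw [Finset.card_smul_finset]
            exact Nat.add_le_add (sdiff_smul_card S D hsymm hs) (ih u hu)
        _ = (m + 1) * (innerBoundary S D).card := by ring

lemma counting (S D : Finset G) (m : ℕ) :
    ∑ w ∈ wordBall S m, (D ∩ w • D).card ≤ D.card * D.card := by
  have h : ∀ w ∈ wordBall S m, (D ∩ w • D).card = (D.filter (fun y => y ∈ w • D)).card := by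
    intro w _; rw [Finset.filter_mem_eq_inter]
  rw [Finset.sum_congr rfl h]
  simp only [Finset.card_filter]
  rw [Finset.sum_comm]
  calc ∑ y ∈ D, ∑ w ∈ wordBall S m, (if y ∈ w • D then 1 else 0)
      ≤ ∑ _y ∈ D, D.card := by
        apply Finset.sum_le_sum
        intro y _
        rw [← Finset.card_filter]
        apply Finset.card_le_card_of_injOn (fun w => w⁻¹ * y)
        · intro w hw
          rw [Finset.mem_coe, Finset.mem_filter, Finset.mem_smul_finset] at hw
          obtain ⟨_, d, hd, rfl⟩ := hw
          simpa [smul_eq_mul] using hd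
        · intro a _ b _ hab
          have : a⁻¹ = b⁻¹ := mul_right_cancel (hab : a⁻¹ * y = b⁻¹ * y)
          exact inv_injective this
      _ = D.card * D.card := by rw [Finset.sum_const, smul_eq_mul]

lemma key_count (S D : Finset G) (hsymm : ∀ s ∈ S, s⁻¹ ∈ S) (m : ℕ) :
    (wordBall S m).card * D.card
      ≤ D.card * D.card + (wordBall S m).card * (m * (innerBoundary S D).card) := by
  have h1 : ∀ w ∈ wordBall S m,
      D.card ≤ (D ∩ w • D).card + m * (innerBoundary S D).card := by
    intro w hw
    have h2 := telescope S D hsymm m w hw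
    have h3 := Finset.card_inter_add_card_sdiff D (w • D)
    omega
  calc (wordBall S m).card * D.card = ∑ _w ∈ wordBall S m, D.card := by
        rw [Finset.sum_const, smul_eq_mul]
    _ ≤ ∑ w ∈ wordBall S m, ((D ∩ w • D).card + m * (innerBoundary S D).card) :=
        Finset.sum_le_sum h1
    _ = (∑ w ∈ wordBall S m, (D ∩ w • D).card)
          + (wordBall S m).card * (m * (innerBoundary S D).card) := by
        rw [Finset.sum_add_distrib, Finset.sum_const, smul_eq_mul]
    _ ≤ D.card * D.card + (wordBall S m).card * (m * (innerBoundary S D).card) := by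
        gcongr
        exact counting S D m

lemma shrink (g g' : ℝ → ℝ) (hgpos : ∀ r : ℝ, 0 < r → 0 < g r)
    (hderiv : ∀ r : ℝ, 0 < r → HasDerivAt g (g' r) r)
    (htame_top : Filter.Tendsto (fun r => r * g' r / g r) Filter.atTop Filter.atTop)
    (lam δ : ℝ) (hlam0 : 0 < lam) (hlam1 : lam < 1) (hδ0 : 0 < δ) :
    ∃ T : ℝ, 0 < T ∧ ∀ t : ℝ, T ≤ t → g (lam * t) ≤ δ * g t := by
  have hloglam : 0 < Real.log lam⁻¹ := Real.log_pos (by rw [one_lt_inv_iff₀]; exact ⟨hlam0, hlam1⟩)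
  set M : ℝ := Real.log δ⁻¹ / Real.log lam⁻¹ with hM
  have hMlog : M * Real.log lam = Real.log δ := by
    have hne : Real.log lam ≠ 0 := by
      have h := hloglam; rw [Real.log_inv] at h; exact (by linarith : Real.log lam < 0).ne
    rw [hM, Real.log_inv, Real.log_inv, neg_div_neg_eq, div_mul_cancel₀ _ hne]
  obtain ⟨R₀, hR₀⟩ := (htame_top.eventually_ge_atTop M).exists_forall_of_atTop
  set R : ℝ := max R₀ 1 with hR
  have hR1 : (1:ℝ) ≤ R := le_max_right _ _
  have hRpos : 0 < R := lt_of_lt_of_le one_pos hR1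
  set φ : ℝ → ℝ := fun r => Real.log (g r) - M * Real.log r with hφ
  have hφd : ∀ r : ℝ, 0 < r → HasDerivAt φ (g' r / g r - M * r⁻¹) r := by
    intro r hr
    exact ((hderiv r hr).log (hgpos r hr).ne').sub
      ((Real.hasDerivAt_log hr.ne').const_mul M)
  have hmonoφ : MonotoneOn φ (Set.Ici R) := by
    apply monotoneOn_of_deriv_nonneg (convex_Ici R)
    · intro x hx
      exact (hφd x (lt_of_lt_of_le hRpos hx)).continuousAt.continuousWithinAt
    · intro x hx
      rw [interior_Ici] at hx
      exact (hφd x (lt_trans hRpos hx)).differentiableAt.differentiableWithinAt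
    · intro x hx
      rw [interior_Ici] at hx
      have hxpos : 0 < x := lt_trans hRpos hx
      rw [(hφd x hxpos).deriv]
      have hxR : M ≤ x * g' x / g x := hR₀ x (le_of_lt (lt_of_le_of_lt (le_max_left _ _) hx))
      have hg : 0 < g x := hgpos x hxpos
      rw [sub_nonneg]
      rw [mul_div_assoc] at hxR
      calc M * x⁻¹ ≤ (x * (g' x / g x)) * x⁻¹ :=
            mul_le_mul_of_nonneg_right hxR (by positivity)
        _ = g' x / g x := by field_simp
  refine ⟨R / lam, div_pos hRpos hlam0, fun t ht => ?_⟩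
  have htR : R ≤ t := le_trans (by rw [le_div_iff₀ hlam0]; nlinarith) ht
  have hltR : R ≤ lam * t := by
    rw [div_le_iff₀ hlam0] at ht; linarith [ht]
  have htpos : 0 < t := lt_of_lt_of_le hRpos htR
  have hltpos : 0 < lam * t := by positivity
  have key := hmonoφ hltR htR (by nlinarith)
  simp only [hφ] at key
  have hlog : Real.log (lam * t) = Real.log lam + Real.log t :=
    Real.log_mul hlam0.ne' htpos.ne'
  rw [hlog] at key
  have hfin : Real.log (g (lam * t)) ≤ Real.log δ + Real.log (g t) := by nlinarith [hMlog]
  rw [← Real.log_mul hδ0.ne' (hgpos t htpos).ne'] at hfin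
  exact (Real.log_le_log_iff (hgpos _ hltpos) (mul_pos hδ0 (hgpos t htpos))).mp hfin

set_option maxHeartbeats 1000000 in
theorem stmt13 (S : Finset G)
    (hsymm : ∀ s ∈ S, s⁻¹ ∈ S) (hgen : Subgroup.closure (S : Set G) = ⊤)
    (hamen : ∀ n : ℕ, folner S n ≠ ⊤)
    (g g' : ℝ → ℝ) (hgpos : ∀ r : ℝ, 0 < r → 0 < g r)
    (hmono : StrictMonoOn g (Set.Ioi 0))
    (hderiv : ∀ r : ℝ, 0 < r → HasDerivAt g (g' r) r)
    (hg'pos : ∀ r : ℝ, 0 < r → 0 < g' r)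
    (htame_top : Filter.Tendsto (fun r => r * g' r / g r) Filter.atTop Filter.atTop)
    (htame_zero : ∀ lam : ℝ, 0 < lam → lam < 1 →
      Filter.Tendsto (fun r => r * g' r * g (lam * r) / (g r) ^ 2)
        Filter.atTop (nhds 0))
    (hgrowth : ∀ r : ℕ, 1 ≤ r → g r ≤ ((wordBall S (r - 1)).card : ℝ))
    (ε : ℝ) (hε0 : 0 < ε) (hε1 : ε < 1) :
    ∃ N : ℕ, ∀ n : ℕ, N ≤ n → ∀ F : ℕ, folner S n = (F : ℕ∞) →
      g ((1 - ε) * (n : ℝ)) ≤ (F : ℝ) := by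
  set δ : ℝ := ε / 2 with hδdef
  have hδ0 : 0 < δ := by positivity
  have hδε : δ < ε := by rw [hδdef]; linarith
  have h1δ : 0 < 1 - δ := by rw [hδdef]; linarith
  set lam : ℝ := (1 - ε) / (1 - δ) with hlamdef
  have hlam0 : 0 < lam := div_pos (by linarith) h1δ
  have hlam1 : lam < 1 := by
    rw [hlamdef, div_lt_one h1δ]; linarith
  obtain ⟨T, hTpos, hT⟩ := shrink g g' hgpos hderiv htame_top lam δ hlam0 hlam1 hδ0
  refine ⟨⌈T / (1 - δ)⌉₊ + 1, fun n hn F hF => ?_⟩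
  have hn1 : 1 ≤ n := le_trans (Nat.le_add_left 1 _) hn
  have hnR : (1:ℝ) ≤ (n:ℝ) := by exact_mod_cast hn1
  -- extract a witness set D
  have hlt : folner S n < (F : ℕ∞) + 1 := by
    rw [hF]
    exact_mod_cast (by exact_mod_cast Nat.lt_succ_self F : (F : ℕ∞) < ((F + 1 : ℕ) : ℕ∞))
  rw [folner] at hlt
  simp only [iInf_lt_iff] at hlt
  obtain ⟨D, hDne, hDfol, hDcard⟩ := hlt
  have hDF : D.card ≤ F := by
    have : (D.card : ℕ∞) < ((F + 1 : ℕ) : ℕ∞) := by exact_mod_cast hDcard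
    exact Nat.lt_succ_iff.mp (by exact_mod_cast this)
  -- set up the real quantities
  set t : ℝ := (1 - δ) * n with htdef
  have htpos : 0 < t := by positivity
  have hTt : T ≤ t := by
    have h1 : T / (1 - δ) ≤ (⌈T / (1 - δ)⌉₊ : ℝ) := Nat.le_ceil _
    have h2 : ((⌈T / (1 - δ)⌉₊ : ℕ) : ℝ) ≤ (n : ℝ) := by
      exact_mod_cast le_trans (Nat.le_succ _) hn
    rw [htdef]
    rw [div_le_iff₀ h1δ] at h1
    nlinarith
  set m : ℕ := ⌊t⌋₊ with hmdef
  have hmt : (m : ℝ) ≤ t := Nat.floor_le htpos.le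
  have htm1 : t ≤ (m : ℝ) + 1 := (Nat.lt_floor_add_one t).le
  -- combinatorial inequality, in ℝ
  have hkey := key_count S D hsymm m
  set b : ℝ := ((wordBall S m).card : ℝ) with hbdef
  set d : ℝ := (D.card : ℝ) with hddef
  set p : ℝ := ((innerBoundary S D).card : ℝ) with hpdef
  have hkeyR : b * d ≤ d * d + b * (m * p) := by rw [hbdef, hddef, hpdef]; exact_mod_cast hkey
  have hfolR : (n : ℝ) * p ≤ d := by rw [hpdef, hddef]; exact_mod_cast hDfol
  have hdpos : 0 < d := by
    rw [hddef]; exact_mod_cast Finset.card_pos.mpr hDne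
  have hppos : 0 ≤ p := by rw [hpdef]; positivity
  have hbpos : 0 ≤ b := by rw [hbdef]; positivity
  -- m * p ≤ (1-δ) * d
  have hmp : (m : ℝ) * p ≤ (1 - δ) * d := by
    have h3 : (m : ℝ) * p ≤ t * p := mul_le_mul_of_nonneg_right hmt hppos
    have h4 : t * p = (1 - δ) * ((n:ℝ) * p) := by rw [htdef]; ring
    nlinarith [hfolR]
  have hδb : δ * b ≤ d := by nlinarith [hkeyR, mul_le_mul_of_nonneg_left hmp hbpos]
  -- growth lower bound
  have hgb : g ((m : ℝ) + 1) ≤ b := by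
    have := hgrowth (m + 1) (Nat.le_add_left 1 m)
    simpa [hbdef] using this
  have hm1pos : (0:ℝ) < (m : ℝ) + 1 := by
    have := Nat.cast_nonneg (α := ℝ) m; linarith
  have hgt : g t ≤ g ((m : ℝ) + 1) :=
    hmono.monotoneOn (Set.mem_Ioi.mpr htpos) (Set.mem_Ioi.mpr hm1pos) htm1
  -- shrink step
  have hlamt : lam * t = (1 - ε) * n := by
    rw [hlamdef, htdef]; field_simp
  have hshr : g ((1 - ε) * n) ≤ δ * g t := by
    rw [← hlamt]; exact hT t hTt
  calc g ((1 - ε) * (n:ℝ)) ≤ δ * g t := hshr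
    _ ≤ δ * g ((m : ℝ) + 1) := mul_le_mul_of_nonneg_left hgt hδ0.le
    _ ≤ δ * b := mul_le_mul_of_nonneg_left hgb hδ0.le
    _ ≤ d := hδb
    _ ≤ (F : ℝ) := by rw [hddef]; exact_mod_cast hDF
end
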